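/- arXiv:1508.07565 — 7 statements merged into one kernel-verified Lean document; each statement's English description precedes it below -/
import Mathlib

section
/- Let σ, r, b be real parameters with σ ≠ 0 and r ≠ 1, and let (x, y, z) : ℝ → ℝ³ be a differentiable solution of the classical Lorenz system x' = -σ(x - y), y' = r x - y - x z, z' = -b z + x y. Then the functions X = x/√2, Y = σ(y - x)/√2, Z = (z - x²/(2σ))/(r - 1) solve the extended Lorenz model X' = Y, Y' = -λ Y + γ X (1 - Z) - δ X³, Z' = -α Z + β X² with parameters α = b, β = (2σ - b)/(σ(r - 1)), γ = σ(r - 1), δ = 1, λ = σ + 1. -/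
/-- The coordinate change taking the classical Lorenz system to the
extended Lorenz model. -/
theorem classical_lorenz_to_extended
    (σ r b : ℝ) (hσ : σ ≠ 0) (hr : r ≠ 1)
    (x y z : ℝ → ℝ)
    (hx : ∀ t, HasDerivAt x (-σ * (x t - y t)) t)
    (hy : ∀ t, HasDerivAt y (r * x t - y t - x t * z t) t)
    (hz : ∀ t, HasDerivAt z (-b * z t + x t * y t) t) :
    let X : ℝ → ℝ := fun t => x t / Real.sqrt 2
    let Y : ℝ → ℝ := fun t => σ * (y t - x t) / Real.sqrt 2
    let Z : ℝ → ℝ := fun t => (z t - (x t) ^ 2 / (2 * σ)) / (r - 1)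
    let α : ℝ := b
    let β : ℝ := (2 * σ - b) / (σ * (r - 1))
    let γ : ℝ := σ * (r - 1)
    let δ : ℝ := 1
    let lam : ℝ := σ + 1
    (∀ t, HasDerivAt X (Y t) t) ∧
    (∀ t, HasDerivAt Y (-lam * Y t + γ * X t * (1 - Z t) - δ * (X t) ^ 3) t) ∧
    (∀ t, HasDerivAt Z (-α * Z t + β * (X t) ^ 2) t) := by
  intro X Y Z α β γ δ lam
  have hs : Real.sqrt 2 ^ 2 = 2 := Real.sq_sqrt (by norm_num)
  have hs0 : Real.sqrt 2 ≠ 0 := by positivity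
  have hr1 : r - 1 ≠ 0 := sub_ne_zero.mpr hr
  refine ⟨?_, ?_, ?_⟩ <;> intro t
  · have h := (hx t).div_const (Real.sqrt 2)
    convert h using 1
    show σ * (y t - x t) / Real.sqrt 2 = _
    ring
    all_goals rfl
  · have h := (((hy t).sub (hx t)).const_mul σ).div_const (Real.sqrt 2)
    convert h using 1
    show -lam * (σ * (y t - x t) / Real.sqrt 2)
        + γ * (x t / Real.sqrt 2) * (1 - (z t - (x t) ^ 2 / (2 * σ)) / (r - 1))
        - δ * (x t / Real.sqrt 2) ^ 3 = _
    simp only [lam, γ, δ]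
    field_simp
    linear_combination (x t ^ 3) * hs
    all_goals rfl
  · have h := ((hz t).sub (((hx t).pow 2).div_const (2 * σ))).div_const (r - 1)
    convert h using 1
    show -α * ((z t - (x t) ^ 2 / (2 * σ)) / (r - 1))
        + β * (x t / Real.sqrt 2) ^ 2 = _
    simp only [α, β]
    field_simp
    linear_combination (b * x t ^ 2 - 2 * σ * x t ^ 2) * hs
    all_goals rfl
end

section
/- Let x₀(t) = √2 / cosh(t). Then for every t ∈ ℝ, the integral of x₀(v)² e^{v} over v ∈ (-∞, t] equals 4·arctan(e^{t}) - 2/cosh(t). Consequently, for any real β, the function z₁(t) = 2β e^{-t}(2·arctan(e^{t}) - 1/cosh(t)) solves z₁'(t) = -z₁(t) + β x₀(t)² and satisfies z₁(t) → 0 as t → ±∞. -/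
open MeasureTheory Filter

/-- `g(t) = 2 arctan eᵗ - 1/cosh t` has derivative `eᵗ / cosh² t`. -/
lemma z1_correction_g_deriv (t : ℝ) :
    HasDerivAt (fun t => 2 * Real.arctan (Real.exp t) - 1 / Real.cosh t)
      (Real.exp t / Real.cosh t ^ 2) t := by
  have h1 : HasDerivAt (fun t : ℝ => Real.arctan (Real.exp t))
      (1 / (1 + Real.exp t ^ 2) * Real.exp t) t :=
    (Real.hasDerivAt_arctan (Real.exp t)).comp t (Real.hasDerivAt_exp t)
  have h2 : HasDerivAt (fun t : ℝ => (Real.cosh t)⁻¹)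
      (-(Real.sinh t) / Real.cosh t ^ 2) t :=
    (Real.hasDerivAt_cosh t).inv (Real.cosh_pos t).ne'
  have h := (h1.const_mul 2).sub h2
  simp only [one_div] at h ⊢
  refine h.congr_deriv ?_
  have hc := Real.cosh_pos t
  have he := Real.exp_pos t
  have hc2 : Real.cosh t = (Real.exp t + (Real.exp t)⁻¹) / 2 := by
    rw [Real.cosh_eq, Real.exp_neg]
  have hs2 : Real.sinh t = (Real.exp t - (Real.exp t)⁻¹) / 2 := by
    rw [Real.sinh_eq, Real.exp_neg]
  rw [hc2, hs2]
  have h1e : (1 : ℝ) + Real.exp t ^ 2 > 0 := by positivity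
  field_simp
  ring

/-- Explicit first-order correction `z₁` to the `Z`-component of the
homoclinic solution: `∫_{-∞}^{t} x₀(v)² eᵛ dv = 4 arctan eᵗ - 2/cosh t`,
and `z₁(t) = 2β e^{-t}(2 arctan eᵗ - 1/cosh t)` solves
`z₁' = -z₁ + β x₀²` with `z₁ → 0` as `t → ±∞`. -/
theorem z1_correction (β : ℝ) :
    let x₀ : ℝ → ℝ := fun t => Real.sqrt 2 / Real.cosh t
    let z₁ : ℝ → ℝ := fun t =>
      2 * β * Real.exp (-t) * (2 * Real.arctan (Real.exp t) - 1 / Real.cosh t)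
    (∀ t : ℝ, ∫ v in Set.Iic t, (x₀ v) ^ 2 * Real.exp v
        = 4 * Real.arctan (Real.exp t) - 2 / Real.cosh t) ∧
    (∀ t, HasDerivAt z₁ (-z₁ t + β * (x₀ t) ^ 2) t) ∧
    Tendsto z₁ atTop (nhds 0) ∧
    Tendsto z₁ atBot (nhds 0) := by
  intro x₀ z₁
  have hsq : Real.sqrt 2 ^ 2 = 2 := Real.sq_sqrt (by norm_num)
  have hx0sq : ∀ v : ℝ, (x₀ v) ^ 2 = 2 / Real.cosh v ^ 2 := by
    intro v; simp only [x₀, div_pow, hsq]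
  refine ⟨?_, ?_, ?_, ?_⟩
  · -- the integral identity
    intro t
    have hF : ∀ u : ℝ, HasDerivAt
        (fun u => 2 * (2 * Real.arctan (Real.exp u) - 1 / Real.cosh u))
        ((x₀ u) ^ 2 * Real.exp u) u := by
      intro u
      have := (z1_correction_g_deriv u).const_mul 2
      refine this.congr_deriv ?_
      rw [hx0sq u]; ring
    have hint : IntegrableOn (fun v => (x₀ v) ^ 2 * Real.exp v) (Set.Iic t) := by
      refine Integrable.mono' ((integrableOn_exp_Iic t).const_mul 2) ?_ ?_
      · have hcont : Continuous fun v => (x₀ v) ^ 2 * Real.exp v :=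
          ((continuous_const.div Real.continuous_cosh
            (fun x => (Real.cosh_pos x).ne')).pow 2).mul Real.continuous_exp
        exact hcont.aestronglyMeasurable.restrict
      · filter_upwards with v
        rw [Real.norm_eq_abs, hx0sq v, abs_of_nonneg (by positivity)]
        have h1 : (1:ℝ) ≤ Real.cosh v ^ 2 := by
          nlinarith [Real.one_le_cosh v]
        have := Real.exp_pos v
        rw [div_mul_eq_mul_div, div_le_iff₀ (by positivity)]
        nlinarith
    have hlim : Tendsto (fun u => 2 * (2 * Real.arctan (Real.exp u) - 1 / Real.cosh u))
        atBot (nhds 0) := by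
      have h1 : Tendsto (fun u : ℝ => Real.arctan (Real.exp u)) atBot (nhds 0) := by
        have := (Real.continuous_arctan.tendsto 0).comp Real.tendsto_exp_atBot
        simpa [Function.comp_def] using this
      have h2 : Tendsto (fun u : ℝ => 1 / Real.cosh u) atBot (nhds 0) := by
        simp only [one_div]
        refine Tendsto.inv_tendsto_atTop (tendsto_atTop_mono
          (fun u => ?_) ((Real.tendsto_exp_atTop.comp
            tendsto_neg_atBot_atTop).atTop_div_const two_pos))
        rw [Real.cosh_eq]
        have := Real.exp_pos u
        simp only [Function.comp]
        nlinarith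
      have := ((h1.const_mul 2).sub h2).const_mul 2
      simpa using this
    have := integral_Iic_of_hasDerivAt_of_tendsto' (fun u _ => hF u) hint hlim
    rw [this]; ring
  · -- the ODE
    intro t
    have hc : HasDerivAt (fun t : ℝ => 2 * β * Real.exp (-t))
        (2 * β * Real.exp (-t) * (-1)) t := by
      have : HasDerivAt (fun t : ℝ => Real.exp (-t)) (Real.exp (-t) * (-1)) t :=
        (Real.hasDerivAt_exp (-t)).comp t ((hasDerivAt_id t).neg)
      have := this.const_mul (2 * β)
      refine this.congr_deriv ?_; ring
    have h := hc.mul (z1_correction_g_deriv t)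
    refine h.congr_deriv ?_
    simp only [z₁, hx0sq t]
    have he := Real.exp_pos t
    have hc0 := Real.cosh_pos t
    rw [Real.exp_neg]
    field_simp
  · -- limit at +∞
    have hc : Tendsto (fun t : ℝ => 2 * β * Real.exp (-t)) atTop (nhds 0) := by
      have := (Real.tendsto_exp_atBot.comp tendsto_neg_atTop_atBot).const_mul (2 * β)
      simpa [Function.comp] using this
    have hg : Tendsto (fun t : ℝ => 2 * Real.arctan (Real.exp t) - 1 / Real.cosh t)
        atTop (nhds (2 * (Real.pi / 2) - 0)) := by
      refine Tendsto.sub ?_ ?_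
      · exact ((Real.tendsto_arctan_atTop.mono_right nhdsWithin_le_nhds).comp
          Real.tendsto_exp_atTop).const_mul 2
      · simp only [one_div]
        refine Tendsto.inv_tendsto_atTop (tendsto_atTop_mono
          (fun u => ?_) (Real.tendsto_exp_atTop.atTop_div_const two_pos))
        rw [Real.cosh_eq]
        have := Real.exp_pos (-u)
        nlinarith
    have h := hc.mul hg
    have h0 : (0 : ℝ) * (2 * (Real.pi / 2) - 0) = 0 := by ring
    rw [h0] at h
    exact h
  · -- limit at -∞
    have hz : ∀ t : ℝ, z₁ t =
        4 * β * (Real.arctan (Real.exp t) / Real.exp t)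
          - 4 * β / (Real.exp t ^ 2 + 1) := by
      intro t
      simp only [z₁]
      have he := Real.exp_pos t
      have h1 : Real.exp t ^ 2 + 1 > 0 := by positivity
      rw [Real.exp_neg, Real.cosh_eq, Real.exp_neg]
      have h2 : Real.exp t + (Real.exp t)⁻¹ > 0 := by positivity
      field_simp
      ring
    have hslope : Tendsto (fun u : ℝ => Real.arctan u / u) (nhdsWithin 0 {(0:ℝ)}ᶜ)
        (nhds 1) := by
      have h := hasDerivAt_iff_tendsto_slope.mp (Real.hasDerivAt_arctan 0)
      have h1 : (1 : ℝ) / (1 + (0:ℝ) ^ 2) = 1 := by norm_num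
      rw [h1] at h
      refine h.congr' ?_
      filter_upwards [self_mem_nhdsWithin] with u hu
      simp [slope_def_field, Real.arctan_zero]
    have hexp : Tendsto Real.exp atBot (nhdsWithin 0 {(0:ℝ)}ᶜ) := by
      refine tendsto_nhdsWithin_of_tendsto_nhds_of_eventually_within _
        Real.tendsto_exp_atBot ?_
      filter_upwards with t
      exact (Real.exp_pos t).ne'
    have harc : Tendsto (fun t : ℝ => Real.arctan (Real.exp t) / Real.exp t)
        atBot (nhds 1) := hslope.comp hexp
    have hden : Tendsto (fun t : ℝ => Real.exp t ^ 2 + 1) atBot (nhds 1) := by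
      have := (Real.tendsto_exp_atBot.pow 2).add (tendsto_const_nhds (x := (1:ℝ)))
      simpa using this
    have hq : Tendsto (fun t : ℝ => 4 * β / (Real.exp t ^ 2 + 1)) atBot
        (nhds (4 * β / 1)) := tendsto_const_nhds.div hden (by norm_num)
    have := (harc.const_mul (4 * β)).sub hq
    have h0 : (4 * β * 1 - 4 * β / 1 : ℝ) = 0 := by ring
    rw [h0] at this
    refine this.congr fun t => (hz t).symm
end

section
/- Let x₀(t) = √2 / cosh(t). Then ∫_{-∞}^{+∞} x₀'(s) · x₀(s) · e^{-s} · ( ∫_{-∞}^{s} x₀(v)² e^{v} dv ) ds = π² - 32/3. Equivalently, ∫_{-∞}^{+∞} (-4) · (sinh(s)/cosh³(s)) · e^{-s} · (2·arctan(e^{s}) - 1/cosh(s)) ds = π² - 32/3. -/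
open MeasureTheory
open Real Filter Set Topology

noncomputable def Φmel : ℝ → ℝ := fun u =>
  4 * arctan u ^ 2 + 8 * u * (u ^ 2 + 3) * arctan u / (u ^ 2 + 1) ^ 2
    + 4 / (u ^ 2 + 1) - 4 / (u ^ 2 + 1) ^ 2 + 32 / (3 * (u ^ 2 + 1) ^ 3)

lemma melDeriv (s : ℝ) :
    HasDerivAt (fun t => Φmel (Real.exp t))
      ((-4) * (Real.sinh s / (Real.cosh s) ^ 3) * Real.exp (-s) *
        (2 * Real.arctan (Real.exp s) - 1 / Real.cosh s)) s := by
  have hu : HasDerivAt Real.exp (Real.exp s) s := Real.hasDerivAt_exp s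
  have hu0 : (0:ℝ) < Real.exp s := Real.exp_pos s
  have hw : (Real.exp s ^ 2 + 1 : ℝ) ≠ 0 := by positivity
  have hA : HasDerivAt (fun t => Real.arctan (Real.exp t))
      (1 / (1 + Real.exp s ^ 2) * Real.exp s) s := (Real.hasDerivAt_arctan _).comp s hu
  have hW : HasDerivAt (fun t => Real.exp t ^ 2 + 1)
      ((2:ℕ) * Real.exp s ^ 1 * Real.exp s) s := ((hu.pow 2).add_const 1)
  have T1 := (hA.pow 2).const_mul (4:ℝ)
  have T2 := (((hu.const_mul (8:ℝ)).mul ((hu.pow 2).add_const (3:ℝ))).mul hA).div (hW.pow 2)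
      (pow_ne_zero 2 hw)
  have T3 := (hasDerivAt_const s (4:ℝ)).div hW hw
  have T4 := (hasDerivAt_const s (4:ℝ)).div (hW.pow 2) (pow_ne_zero 2 hw)
  have T5 := (hasDerivAt_const s (32:ℝ)).div ((hW.pow 3).const_mul (3:ℝ))
      (mul_ne_zero three_ne_zero (pow_ne_zero 3 hw))
  have H := ((((T1.add T2).add T3).sub T4).add T5)
  refine H.congr_deriv ?_
  rw [Real.sinh_eq, Real.cosh_eq, Real.exp_neg]
  have h1 : (1 + Real.exp s ^ 2 : ℝ) ≠ 0 := by positivity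
  have h2 : (Real.exp s + (Real.exp s)⁻¹ : ℝ) ≠ 0 := by positivity
  have h3 : (Real.exp s : ℝ) ≠ 0 := hu0.ne'
  simp only [Pi.pow_apply, Pi.mul_apply, Pi.add_apply, Pi.div_apply]
  push_cast
  field_simp
  ring

lemma melCont : Continuous Φmel := by
  unfold Φmel
  have h1 : ∀ x : ℝ, (x ^ 2 + 1 : ℝ) ≠ 0 := fun x => by positivity
  refine ((((continuous_const.mul (Real.continuous_arctan.pow 2)).add ?_).add ?_).sub ?_).add ?_
  · exact Continuous.div
      (((continuous_const.mul continuous_id).mul ((continuous_pow 2).add continuous_const)).mul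
        Real.continuous_arctan)
      (((continuous_pow 2).add continuous_const).pow 2) (fun x => by positivity)
  · exact Continuous.div continuous_const ((continuous_pow 2).add continuous_const) h1
  · exact Continuous.div continuous_const (((continuous_pow 2).add continuous_const).pow 2)
      (fun x => by positivity)
  · exact Continuous.div continuous_const
      (continuous_const.mul (((continuous_pow 2).add continuous_const).pow 3))
      (fun x => by positivity)

lemma melBot : Tendsto (fun s => Φmel (Real.exp s)) atBot (𝓝 (32 / 3)) := by
  have h := (melCont.continuousAt (x := 0)).tendsto.comp Real.tendsto_exp_atBot
  convert h using 2
  all_goals norm_num [Φmel, Real.arctan_zero]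

lemma melTop : Tendsto (fun s => Φmel (Real.exp s)) atTop (𝓝 (π ^ 2)) := by
  have ht : Tendsto (fun s : ℝ => Real.exp (-s)) atTop (𝓝 0) :=
    Real.tendsto_exp_atBot.comp tendsto_neg_atTop_atBot
  have ha : Tendsto (fun s : ℝ => Real.arctan (Real.exp s)) atTop (𝓝 (π / 2)) :=
    (Real.tendsto_arctan_atTop.mono_right nhdsWithin_le_nhds).comp Real.tendsto_exp_atTop
  have T1 := (ha.pow 2).const_mul (4 : ℝ)
  have T2 := (((ht.add ((ht.pow 3).const_mul 3)).const_mul (8:ℝ)).mul ha).div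
      (((ht.pow 2).const_add (1:ℝ)).pow 2) (by norm_num)
  have T3 := ((ht.pow 2).const_mul (4:ℝ)).div ((ht.pow 2).const_add (1:ℝ)) (by norm_num)
  have T4 := ((ht.pow 4).const_mul (4:ℝ)).div (((ht.pow 2).const_add (1:ℝ)).pow 2) (by norm_num)
  have T5 := ((ht.pow 6).const_mul (32:ℝ)).div
      ((((ht.pow 2).const_add (1:ℝ)).pow 3).const_mul (3:ℝ)) (by norm_num)
  have H := (((T1.add T2).add T3).sub T4).add T5
  have hval : (4 * (π / 2) ^ 2 + 8 * (0 + 3 * 0 ^ 3) * (π / 2) / (1 + 0 ^ 2) ^ 2 +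
      4 * 0 ^ 2 / (1 + 0 ^ 2) - 4 * 0 ^ 4 / (1 + 0 ^ 2) ^ 2 +
      32 * 0 ^ 6 / (3 * (1 + 0 ^ 2) ^ 3) : ℝ) = π ^ 2 := by norm_num; ring
  rw [← hval]
  refine H.congr (fun s => ?_)
  have h3 : (Real.exp s : ℝ) ≠ 0 := (Real.exp_pos s).ne'
  have h1 : (1 + Real.exp (-s) ^ 2 : ℝ) ≠ 0 := by positivity
  have h2 : (Real.exp s ^ 2 + 1 : ℝ) ≠ 0 := by positivity
  simp only [Φmel, Real.exp_neg, Pi.add_apply, Pi.sub_apply, Pi.div_apply]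
  field_simp

lemma melIntegrable : Integrable (fun s : ℝ => (-4) * (Real.sinh s / (Real.cosh s) ^ 3) *
    Real.exp (-s) * (2 * Real.arctan (Real.exp s) - 1 / Real.cosh s)) := by
  have hbase : Integrable (fun s : ℝ => Real.exp (-|s|)) := by
    rw [← integrableOn_univ, ← Set.Iic_union_Ioi (a := (0:ℝ))]
    apply IntegrableOn.union
    · exact (integrableOn_exp_Iic 0).congr_fun
        (fun x hx => by rw [abs_of_nonpos hx, neg_neg]) measurableSet_Iic
    · exact (exp_neg_integrableOn_Ioi 0 one_pos).congr_fun
        (fun x hx => by rw [abs_of_pos hx]; norm_num) measurableSet_Ioi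
  have hcont : Continuous (fun s : ℝ => (-4) * (Real.sinh s / (Real.cosh s) ^ 3) *
      Real.exp (-s) * (2 * Real.arctan (Real.exp s) - 1 / Real.cosh s)) := by
    have hc3 : ∀ x : ℝ, (Real.cosh x) ^ 3 ≠ 0 := fun x => by positivity
    have hc : ∀ x : ℝ, Real.cosh x ≠ 0 := fun x => (Real.cosh_pos x).ne'
    exact ((continuous_const.mul (Real.continuous_sinh.div (Real.continuous_cosh.pow 3) hc3)).mul
        (Real.continuous_exp.comp continuous_neg)).mul
      ((continuous_const.mul (Real.continuous_arctan.comp Real.continuous_exp)).sub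
        (continuous_const.div Real.continuous_cosh hc))
  refine ((hbase.const_mul (16 * (π + 1))).mono' hcont.aestronglyMeasurable
      (Filter.Eventually.of_forall fun s => ?_))
  have hc := Real.cosh_pos s
  have hc1 := Real.one_le_cosh s
  have hε := Real.exp_pos (-s)
  have hπ : (0:ℝ) < π + 1 := by positivity
  have hsc : |Real.sinh s| ≤ Real.cosh s := by
    rw [Real.abs_sinh, ← Real.cosh_abs s]
    exact (Real.sinh_lt_cosh _).le
  have hatan : |2 * Real.arctan (Real.exp s) - 1 / Real.cosh s| ≤ π + 1 := by
    refine (abs_sub _ _).trans ?_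
    have h1 : |2 * Real.arctan (Real.exp s)| ≤ π := by
      rw [abs_mul]
      have hlt := Real.arctan_mem_Ioo (Real.exp s)
      have habs : |Real.arctan (Real.exp s)| ≤ π / 2 :=
        abs_le.2 ⟨hlt.1.le, hlt.2.le⟩
      calc |(2:ℝ)| * |Real.arctan (Real.exp s)| ≤ 2 * (π / 2) := by
            rw [abs_two]; exact mul_le_mul_of_nonneg_left habs (by norm_num)
        _ = π := by ring
    have h2 : |1 / Real.cosh s| ≤ 1 := by
      rw [abs_of_pos (by positivity), div_le_one hc]; exact hc1
    linarith
  have hexps : Real.exp (-s) ≤ 2 * Real.cosh s := by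
    rw [Real.cosh_eq]; nlinarith [Real.exp_pos s]
  have key : |(-4) * (Real.sinh s / (Real.cosh s) ^ 3) * Real.exp (-s) *
      (2 * Real.arctan (Real.exp s) - 1 / Real.cosh s)| ≤ 8 * (π + 1) / Real.cosh s := by
    rw [abs_mul, abs_mul, abs_mul, abs_div, abs_of_pos hε, abs_pow, abs_of_pos hc]
    have : |(-4:ℝ)| = 4 := by norm_num
    rw [this]
    calc 4 * (|Real.sinh s| / Real.cosh s ^ 3) * Real.exp (-s) *
          |2 * Real.arctan (Real.exp s) - 1 / Real.cosh s|
        ≤ 4 * (Real.cosh s / Real.cosh s ^ 3) * (2 * Real.cosh s) * (π + 1) := by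
          gcongr
      _ = 8 * (π + 1) / Real.cosh s := by field_simp; ring
  refine key.trans ?_
  rw [div_le_iff₀ hc]
  have hmul : Real.exp (-|s|) * Real.exp |s| = 1 := by rw [← Real.exp_add]; simp
  have hch : Real.exp |s| ≤ 2 * Real.cosh s := by
    rw [← Real.cosh_abs, Real.cosh_eq]
    nlinarith [Real.exp_pos (-|s|)]
  nlinarith [mul_le_mul_of_nonneg_left hch (Real.exp_pos (-|s|)).le, hmul, hπ,
    Real.exp_pos (-|s|)]

lemma melKey : (∫ s : ℝ, (-4) * (Real.sinh s / (Real.cosh s) ^ 3) * Real.exp (-s) *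
    (2 * Real.arctan (Real.exp s) - 1 / Real.cosh s)) = π ^ 2 - 32 / 3 :=
  integral_of_hasDerivAt_of_tendsto melDeriv melIntegrable melBot melTop

lemma melInner (s : ℝ) :
    (∫ v in Set.Iic s, (Real.sqrt 2 / Real.cosh v) ^ 2 * Real.exp v) =
      4 * Real.arctan (Real.exp s) - 2 / Real.cosh s := by
  have hderiv : ∀ v ∈ Set.Iic s, HasDerivAt (fun v => 4 * Real.arctan (Real.exp v) - 2 / Real.cosh v)
      ((Real.sqrt 2 / Real.cosh v) ^ 2 * Real.exp v) v := by
    intro v _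
    have hu : HasDerivAt Real.exp (Real.exp v) v := Real.hasDerivAt_exp v
    have hA := ((Real.hasDerivAt_arctan (Real.exp v)).comp v hu).const_mul (4:ℝ)
    have hC := (hasDerivAt_const v (2:ℝ)).div (Real.hasDerivAt_cosh v) (Real.cosh_pos v).ne'
    have H := hA.sub hC
    refine H.congr_deriv ?_
    rw [Real.sinh_eq, Real.cosh_eq, Real.exp_neg]
    have h3 : (Real.exp v : ℝ) ≠ 0 := (Real.exp_pos v).ne'
    have h1 : (1 + Real.exp v ^ 2 : ℝ) ≠ 0 := by positivity
    have h2 : (Real.exp v + (Real.exp v)⁻¹ : ℝ) ≠ 0 := by positivity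
    have hs2 : Real.sqrt 2 ^ 2 = 2 := Real.sq_sqrt (by norm_num)
    rw [div_pow (Real.sqrt 2), hs2]
    field_simp
    ring
  have hint : IntegrableOn (fun v => (Real.sqrt 2 / Real.cosh v) ^ 2 * Real.exp v) (Set.Iic s) := by
    refine ((integrableOn_exp_Iic s).const_mul 2).mono' ?_ ?_
    · have hc : ∀ x : ℝ, Real.cosh x ≠ 0 := fun x => (Real.cosh_pos x).ne'
      exact (((continuous_const.div Real.continuous_cosh hc).pow 2).mul
        Real.continuous_exp).aestronglyMeasurable.restrict
    · refine Filter.Eventually.of_forall fun v => ?_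
      have hc := Real.cosh_pos v
      have hc1 := Real.one_le_cosh v
      have hs2 : Real.sqrt 2 ^ 2 = 2 := Real.sq_sqrt (by norm_num)
      rw [Real.norm_eq_abs, abs_of_nonneg (by positivity), div_pow, hs2]
      have h1 : 2 / Real.cosh v ^ 2 ≤ 2 := by
        rw [div_le_iff₀ (by positivity)]; nlinarith
      have := Real.exp_pos v
      nlinarith
  have hbot : Tendsto (fun v => 4 * Real.arctan (Real.exp v) - 2 / Real.cosh v) atBot (𝓝 0) := by
    have h1 : Tendsto (fun v : ℝ => Real.arctan (Real.exp v)) atBot (𝓝 0) := by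
      have := (Real.continuous_arctan.continuousAt (x := 0)).tendsto.comp Real.tendsto_exp_atBot
      simpa [Real.arctan_zero, Function.comp_def] using this
    have h2 : Tendsto (fun v : ℝ => 2 / Real.cosh v) atBot (𝓝 0) := by
      apply squeeze_zero (fun v => by positivity) (fun v => ?_)
        (by simpa using (Real.tendsto_exp_atBot.const_mul (4:ℝ)))
      have hc := Real.cosh_pos v
      rw [div_le_iff₀ hc, Real.cosh_eq]
      have hm : Real.exp v * Real.exp (-v) = 1 := by rw [← Real.exp_add]; simp
      nlinarith [hm, mul_pos (Real.exp_pos v) (Real.exp_pos v)]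
    have := (h1.const_mul (4:ℝ)).sub h2
    simpa using this
  have := integral_Iic_of_hasDerivAt_of_tendsto' hderiv hint hbot
  rw [this]; ring

/-- The coefficient of `β` in the Melnikov-type functional:
`∫_{-∞}^{∞} x₀'(s) x₀(s) e^{-s} (∫_{-∞}^{s} x₀(v)² eᵛ dv) ds = π² - 32/3`. -/
theorem melnikov_beta_coefficient :
    let x₀ : ℝ → ℝ := fun t => Real.sqrt 2 / Real.cosh t
    (∫ s : ℝ, deriv x₀ s * x₀ s * Real.exp (-s) *
        ∫ v in Set.Iic s, (x₀ v) ^ 2 * Real.exp v) = Real.pi ^ 2 - 32 / 3 ∧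
    (∫ s : ℝ, (-4) * (Real.sinh s / (Real.cosh s) ^ 3) * Real.exp (-s) *
        (2 * Real.arctan (Real.exp s) - 1 / Real.cosh s)) = Real.pi ^ 2 - 32 / 3 := by
  intro x₀
  refine ⟨?_, melKey⟩
  have hfun : (fun s : ℝ => deriv x₀ s * x₀ s * Real.exp (-s) *
      ∫ v in Set.Iic s, (x₀ v) ^ 2 * Real.exp v) =
      (fun s : ℝ => (-4) * (Real.sinh s / (Real.cosh s) ^ 3) * Real.exp (-s) *
        (2 * Real.arctan (Real.exp s) - 1 / Real.cosh s)) := by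
    funext s
    have hd : HasDerivAt x₀ ((0 * Real.cosh s - Real.sqrt 2 * Real.sinh s) / Real.cosh s ^ 2) s :=
      (hasDerivAt_const s (Real.sqrt 2)).div (Real.hasDerivAt_cosh s) (Real.cosh_pos s).ne'
    rw [show deriv x₀ s = (0 * Real.cosh s - Real.sqrt 2 * Real.sinh s) / Real.cosh s ^ 2 from
      hd.deriv, melInner s]
    show (0 * Real.cosh s - Real.sqrt 2 * Real.sinh s) / Real.cosh s ^ 2 *
        (Real.sqrt 2 / Real.cosh s) * Real.exp (-s) *
        (4 * Real.arctan (Real.exp s) - 2 / Real.cosh s) = _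
    have hc := (Real.cosh_pos s).ne'
    have hs2 : Real.sqrt 2 * Real.sqrt 2 = 2 := Real.mul_self_sqrt (by norm_num)
    have e1 : (0 * Real.cosh s - Real.sqrt 2 * Real.sinh s) * Real.sqrt 2 =
        -2 * Real.sinh s := by linear_combination (-Real.sinh s) * hs2
    rw [div_mul_div_comm, e1]
    field_simp
    ring
  rw [hfun, melKey]
end

section
/- Let C : ℝ → Matrix (Fin 3) (Fin 3) ℝ be continuous, and let ξ₁, ξ₂ : ℝ → ℝ³ be differentiable functions satisfying ξᵢ'(t) = C(t) ξᵢ(t) (i = 1, 2) for all t. Then the cross product η(t) = ξ₁(t) × ξ₂(t) is differentiable and satisfies the linear ODE η'(t) = D(t) η(t), where D(t) = trace(C(t)) · Id - C(t)ᵀ. -/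
open Matrix

/-- Evolution of the cross product of two solutions of a nonautonomous
linear system `ξ' = C(t) ξ`: it satisfies `η' = D(t) η` with
`D(t) = tr C(t) · Id - C(t)ᵀ`. -/
theorem cross_product_evolution
    (C : ℝ → Matrix (Fin 3) (Fin 3) ℝ) (hC : Continuous C)
    (ξ₁ ξ₂ : ℝ → Fin 3 → ℝ)
    (h₁ : ∀ t, HasDerivAt ξ₁ (C t *ᵥ ξ₁ t) t)
    (h₂ : ∀ t, HasDerivAt ξ₂ (C t *ᵥ ξ₂ t) t) :
    ∀ t, HasDerivAt (fun s => crossProduct (ξ₁ s) (ξ₂ s))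
      (((Matrix.trace (C t)) • (1 : Matrix (Fin 3) (Fin 3) ℝ) - (C t)ᵀ) *ᵥ
        crossProduct (ξ₁ t) (ξ₂ t)) t := by
  intro t
  have e1 : ∀ i, HasDerivAt (fun s => ξ₁ s i) ((C t *ᵥ ξ₁ t) i) t :=
    fun i => hasDerivAt_pi.mp (h₁ t) i
  have e2 : ∀ i, HasDerivAt (fun s => ξ₂ s i) ((C t *ᵥ ξ₂ t) i) t :=
    fun i => hasDerivAt_pi.mp (h₂ t) i
  rw [hasDerivAt_pi]
  intro i
  have key : ∀ (d1 d2 : Fin 3), HasDerivAt (fun s => ξ₁ s d1 * ξ₂ s d2 - ξ₁ s d2 * ξ₂ s d1)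
      ((C t *ᵥ ξ₁ t) d1 * ξ₂ t d2 + ξ₁ t d1 * (C t *ᵥ ξ₂ t) d2 -
        ((C t *ᵥ ξ₁ t) d2 * ξ₂ t d1 + ξ₁ t d2 * (C t *ᵥ ξ₂ t) d1)) t :=
    fun d1 d2 => ((e1 d1).mul (e2 d2)).sub ((e1 d2).mul (e2 d1))
  fin_cases i
  · refine (key 1 2).congr_deriv ?_
    simp [Matrix.mulVec, dotProduct, Matrix.trace, Matrix.diag, Fin.sum_univ_three,
      cross_apply, Matrix.transpose_apply]
    ring
  · refine (key 2 0).congr_deriv ?_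
    simp [Matrix.mulVec, dotProduct, Matrix.trace, Matrix.diag, Fin.sum_univ_three,
      cross_apply, Matrix.transpose_apply]
    ring
  · refine (key 0 1).congr_deriv ?_
    simp [Matrix.mulVec, dotProduct, Matrix.trace, Matrix.diag, Fin.sum_univ_three,
      cross_apply, Matrix.transpose_apply]
    ring
end

section
/- Define v₄⁰(t) = -(sinh(t)/(2cosh²(t)))e^{-t}, v₂⁰(t) = (1/(4cosh²(t)))(1 - 2 tanh(t)), and v₃⁰(t) = (1/(4√2))(π + 4·arctan(tanh(t/2)) + (2/cosh(t))(2 - tanh(t))). Then for all t ∈ ℝ these functions satisfy the linear system v₄' = -2v₂, v₂' = -2v₂ + 3·(1/cosh²(t))·v₄, v₃' = (√2/cosh(t))·v₄, with boundary values (v₄⁰, v₂⁰, v₃⁰)(t) → (1, 0, 0) as t → -∞; moreover v₃⁰(t) → π/(2√2) as t → +∞. -/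
open Filter

section SeparatrixAux

open Real

lemma sep_tanh_alt (t : ℝ) : Real.tanh t = (Real.exp (2*t) - 1) / (Real.exp (2*t) + 1) := by
  have h := Real.exp_pos t
  rw [Real.tanh_eq_sinh_div_cosh, Real.sinh_eq, Real.cosh_eq]
  rw [show (2:ℝ)*t = t + t by ring, Real.exp_add]
  rw [div_eq_div_iff (by positivity) (by positivity)]
  have : Real.exp (-t) = (Real.exp t)⁻¹ := Real.exp_neg t
  field_simp [this]
  have hx : Real.exp t * Real.exp (-t) = 1 := by rw [← Real.exp_add]; simp
  linear_combination (-2*Real.exp t) * hx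

lemma sep_tanh_atBot : Tendsto Real.tanh atBot (nhds (-1)) := by
  have h2t : Tendsto (fun t : ℝ => Real.exp (2*t)) atBot (nhds 0) :=
    Real.tendsto_exp_atBot.comp (tendsto_id.const_mul_atBot (by norm_num : (0:ℝ) < 2))
  have : Tendsto (fun t : ℝ => (Real.exp (2*t) - 1) / (Real.exp (2*t) + 1)) atBot
      (nhds ((0 - 1)/(0 + 1))) :=
    Tendsto.div (h2t.sub tendsto_const_nhds) (h2t.add tendsto_const_nhds) (by norm_num)
  norm_num at this
  exact this.congr fun t => (sep_tanh_alt t).symm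

lemma sep_tanh_atTop : Tendsto Real.tanh atTop (nhds 1) := by
  have h2t : Tendsto (fun t : ℝ => Real.exp (-(2*t))) atTop (nhds 0) :=
    Real.tendsto_exp_atBot.comp (by
      simpa using (tendsto_neg_atBot_iff (α := ℝ)).mpr
        (tendsto_id.const_mul_atTop (by norm_num : (0:ℝ) < 2)))
  have key : ∀ t : ℝ, Real.tanh t = (1 - Real.exp (-(2*t))) / (1 + Real.exp (-(2*t))) := by
    intro t
    rw [sep_tanh_alt]
    have h := Real.exp_pos (2*t)
    rw [Real.exp_neg, div_eq_div_iff (by positivity) (by positivity)]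
    field_simp
    try ring
  have : Tendsto (fun t : ℝ => (1 - Real.exp (-(2*t))) / (1 + Real.exp (-(2*t)))) atTop
      (nhds ((1 - 0)/(1 + 0))) :=
    Tendsto.div (tendsto_const_nhds.sub h2t) (tendsto_const_nhds.add h2t) (by norm_num)
  norm_num at this
  exact this.congr fun t => (key t).symm

lemma sep_cosh_atTop : Tendsto Real.cosh atTop atTop := by
  apply tendsto_atTop_mono (fun t => ?_)
    (Real.tendsto_exp_atTop.atTop_div_const (by norm_num : (0:ℝ) < 2))
  rw [Real.cosh_eq]
  have := Real.exp_pos (-t); linarith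

lemma sep_cosh_atBot : Tendsto Real.cosh atBot atTop := by
  have hneg : Tendsto (fun t : ℝ => Real.exp (-t)) atBot atTop :=
    Real.tendsto_exp_atTop.comp tendsto_neg_atBot_atTop
  apply tendsto_atTop_mono (fun t => ?_) (hneg.atTop_div_const (by norm_num : (0:ℝ) < 2))
  rw [Real.cosh_eq]
  have := Real.exp_pos t; linarith

lemma sep_inv_cosh_atBot : Tendsto (fun t : ℝ => 1 / Real.cosh t) atBot (nhds 0) := by
  exact sep_cosh_atBot.inv_tendsto_atTop.congr fun t => (one_div _).symm

lemma sep_inv_cosh_atTop : Tendsto (fun t : ℝ => 1 / Real.cosh t) atTop (nhds 0) := by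
  exact sep_cosh_atTop.inv_tendsto_atTop.congr fun t => (one_div _).symm

lemma sep_v4_deriv (t : ℝ) :
    HasDerivAt (fun t => -(Real.sinh t / (2 * (Real.cosh t) ^ 2)) * Real.exp (-t))
      (-2 * ((1 / (4 * (Real.cosh t) ^ 2)) * (1 - 2 * Real.tanh t))) t := by
  have hcpos := Real.cosh_pos t
  have hc0 : Real.cosh t ≠ 0 := ne_of_gt hcpos
  have hs := Real.hasDerivAt_sinh t
  have hc := Real.hasDerivAt_cosh t
  have hden : HasDerivAt (fun t => 2 * (Real.cosh t) ^ 2)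
      (2 * (2 * Real.cosh t ^ 1 * Real.sinh t)) t := (hc.pow 2).const_mul 2
  have hdiv := (hs.div hden (by positivity)).neg
  have hexp : HasDerivAt (fun t : ℝ => Real.exp (-t)) (Real.exp (-t) * (-1)) t :=
    (Real.hasDerivAt_exp (-t)).comp t (hasDerivAt_neg t)
  have h := hdiv.mul hexp
  refine h.congr_deriv (Eq.symm ?_)
  simp only [Pi.neg_apply, Pi.div_apply]
  have he : Real.exp (-t) = Real.cosh t - Real.sinh t := (Real.cosh_sub_sinh t).symm
  have hsq := Real.cosh_sq_sub_sinh_sq t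
  rw [Real.tanh_eq_sinh_div_cosh]
  field_simp
  ring_nf
  linear_combination (4*Real.cosh t - 8*Real.sinh t) * hsq +
    (-(4*Real.cosh t*Real.sinh t - 4*Real.cosh t^2 + 8*Real.sinh t^2)) * he

lemma sep_v2_deriv (t : ℝ) :
    HasDerivAt (fun t => (1 / (4 * (Real.cosh t) ^ 2)) * (1 - 2 * Real.tanh t))
      (-2 * ((1 / (4 * (Real.cosh t) ^ 2)) * (1 - 2 * Real.tanh t)) +
        3 * (1 / (Real.cosh t) ^ 2) *
          (-(Real.sinh t / (2 * (Real.cosh t) ^ 2)) * Real.exp (-t))) t := by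
  have hcpos := Real.cosh_pos t
  have hc0 : Real.cosh t ≠ 0 := ne_of_gt hcpos
  have hs := Real.hasDerivAt_sinh t
  have hc := Real.hasDerivAt_cosh t
  simp only [Real.tanh_eq_sinh_div_cosh]
  have hden : HasDerivAt (fun t => 4 * (Real.cosh t) ^ 2)
      (4 * (2 * Real.cosh t ^ 1 * Real.sinh t)) t := (hc.pow 2).const_mul 4
  have h1 : HasDerivAt (fun t => 1 / (4 * (Real.cosh t) ^ 2))
      ((0 * (4 * Real.cosh t ^ 2) - 1 * (4 * (2 * Real.cosh t ^ 1 * Real.sinh t))) /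
        (4 * Real.cosh t ^ 2) ^ 2) t := (hasDerivAt_const t 1).div hden (by positivity)
  have h2 : HasDerivAt (fun t => 1 - 2 * (Real.sinh t / Real.cosh t))
      (0 - 2 * ((Real.cosh t * Real.cosh t - Real.sinh t * Real.sinh t) / Real.cosh t ^ 2)) t :=
    (hasDerivAt_const t 1).sub (((hs.div hc hc0)).const_mul 2)
  have h := h1.mul h2
  refine h.congr_deriv (Eq.symm ?_)
  have he : Real.exp (-t) = Real.cosh t - Real.sinh t := (Real.cosh_sub_sinh t).symm
  have hsq := Real.cosh_sq_sub_sinh_sq t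
  field_simp
  ring_nf
  linear_combination (-(12:ℝ)*Real.sinh t) * he

lemma sep_arctan_tanh_half_deriv (t : ℝ) :
    HasDerivAt (fun t => Real.arctan (Real.tanh (t / 2))) (1 / (2 * Real.cosh t)) t := by
  have hc0 : Real.cosh (t/2) ≠ 0 := ne_of_gt (Real.cosh_pos _)
  simp only [Real.tanh_eq_sinh_div_cosh]
  have hhalf : HasDerivAt (fun t : ℝ => t / 2) (1/2) t := (hasDerivAt_id t).div_const 2
  have hsh : HasDerivAt (fun t : ℝ => Real.sinh (t/2)) (Real.cosh (t/2) * (1/2)) t :=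
    (Real.hasDerivAt_sinh (t/2)).comp (h₂ := Real.sinh) t hhalf
  have hch : HasDerivAt (fun t : ℝ => Real.cosh (t/2)) (Real.sinh (t/2) * (1/2)) t :=
    (Real.hasDerivAt_cosh (t/2)).comp (h₂ := Real.cosh) t hhalf
  have h := (hsh.div hch hc0).arctan
  refine h.congr_deriv (Eq.symm ?_)
  simp only [Pi.div_apply]
  have hct : Real.cosh t = Real.cosh (t/2) ^ 2 + Real.sinh (t/2) ^ 2 := by
    rw [show t = t/2 + t/2 by ring, Real.cosh_add]; ring
  have hsq := Real.cosh_sq_sub_sinh_sq (t/2)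
  rw [hct]
  field_simp
  linear_combination (-(1:ℝ)) * hsq

lemma sep_v3_deriv (t : ℝ) :
    HasDerivAt (fun t => (1 / (4 * Real.sqrt 2)) *
      (Real.pi + 4 * Real.arctan (Real.tanh (t / 2)) +
        (2 / Real.cosh t) * (2 - Real.tanh t)))
      ((Real.sqrt 2 / Real.cosh t) *
        (-(Real.sinh t / (2 * (Real.cosh t) ^ 2)) * Real.exp (-t))) t := by
  have hcpos := Real.cosh_pos t
  have hc0 : Real.cosh t ≠ 0 := ne_of_gt hcpos
  have hs := Real.hasDerivAt_sinh t
  have hc := Real.hasDerivAt_cosh t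
  have hA := sep_arctan_tanh_half_deriv t
  have hB : HasDerivAt (fun t => 2 / Real.cosh t)
      ((0 * Real.cosh t - 2 * Real.sinh t) / Real.cosh t ^ 2) t :=
    (hasDerivAt_const t 2).div hc hc0
  have hC : HasDerivAt (fun t => 2 - Real.tanh t)
      (0 - (Real.cosh t * Real.cosh t - Real.sinh t * Real.sinh t) / Real.cosh t ^ 2) t := by
    have heq : (fun t => 2 - Real.tanh t) = fun t => 2 - Real.sinh t / Real.cosh t :=
      funext fun x => by rw [Real.tanh_eq_sinh_div_cosh]
    rw [heq]
    exact (hasDerivAt_const t 2).sub (hs.div hc hc0)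
  have h := (((hasDerivAt_const t Real.pi).add (hA.const_mul 4)).add (hB.mul hC)).const_mul
    (1 / (4 * Real.sqrt 2))
  refine h.congr_deriv (Eq.symm ?_)
  have he : Real.exp (-t) = Real.cosh t - Real.sinh t := (Real.cosh_sub_sinh t).symm
  have hsq := Real.cosh_sq_sub_sinh_sq t
  have hs2 : Real.sqrt 2 * Real.sqrt 2 = 2 := Real.mul_self_sqrt (by norm_num)
  have hs2ne : Real.sqrt 2 ≠ 0 := by positivity
  rw [Real.tanh_eq_sinh_div_cosh]
  field_simp
  linear_combination (-4*Real.sinh t*Real.exp (-t)) * hs2 +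
    (-8*Real.sinh t) * he

end SeparatrixAux

/-- The explicit zeroth-order solution `(v₄⁰, v₂⁰, v₃⁰)` of the linear
system for the separatrix value. -/
theorem zeroth_order_separatrix_system :
    let v₄ : ℝ → ℝ := fun t => -(Real.sinh t / (2 * (Real.cosh t) ^ 2)) * Real.exp (-t)
    let v₂ : ℝ → ℝ := fun t => (1 / (4 * (Real.cosh t) ^ 2)) * (1 - 2 * Real.tanh t)
    let v₃ : ℝ → ℝ := fun t => (1 / (4 * Real.sqrt 2)) *
      (Real.pi + 4 * Real.arctan (Real.tanh (t / 2)) +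
        (2 / Real.cosh t) * (2 - Real.tanh t))
    (∀ t, HasDerivAt v₄ (-2 * v₂ t) t) ∧
    (∀ t, HasDerivAt v₂ (-2 * v₂ t + 3 * (1 / (Real.cosh t) ^ 2) * v₄ t) t) ∧
    (∀ t, HasDerivAt v₃ ((Real.sqrt 2 / Real.cosh t) * v₄ t) t) ∧
    Tendsto v₄ atBot (nhds 1) ∧
    Tendsto v₂ atBot (nhds 0) ∧
    Tendsto v₃ atBot (nhds 0) ∧
    Tendsto v₃ atTop (nhds (Real.pi / (2 * Real.sqrt 2))) := by
  intro v₄ v₂ v₃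
  refine ⟨fun t => sep_v4_deriv t, fun t => sep_v2_deriv t, fun t => sep_v3_deriv t, ?_, ?_, ?_, ?_⟩
  · -- v₄ atBot
    have key : ∀ t, v₄ t = (Real.tanh t ^ 2 - Real.tanh t) / 2 := by
      intro t
      have hc0 : Real.cosh t ≠ 0 := ne_of_gt (Real.cosh_pos t)
      show -(Real.sinh t / (2 * (Real.cosh t) ^ 2)) * Real.exp (-t) = _
      have he : Real.exp (-t) = Real.cosh t - Real.sinh t := (Real.cosh_sub_sinh t).symm
      rw [Real.tanh_eq_sinh_div_cosh]
      field_simp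
      linear_combination (-Real.sinh t) * he
    have h : Tendsto (fun t => (Real.tanh t ^ 2 - Real.tanh t) / 2) atBot
        (nhds (((-1:ℝ) ^ 2 - (-1)) / 2)) :=
      (((sep_tanh_atBot.pow 2).sub sep_tanh_atBot).div_const 2)
    norm_num at h
    exact h.congr fun t => (key t).symm
  · -- v₂ atBot
    have h1 : Tendsto (fun t => 1 / (4 * (Real.cosh t) ^ 2)) atBot (nhds 0) := by
      have h := (sep_inv_cosh_atBot.mul sep_inv_cosh_atBot).div_const 4
      rw [show ((0:ℝ) * 0 / 4) = 0 by norm_num] at h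
      apply h.congr
      intro t
      have hc0 : Real.cosh t ≠ 0 := ne_of_gt (Real.cosh_pos t)
      field_simp
    have h2 : Tendsto (fun t => 1 - 2 * Real.tanh t) atBot (nhds (1 - 2 * (-1))) :=
      tendsto_const_nhds.sub (sep_tanh_atBot.const_mul 2)
    have h := h1.mul h2
    rw [show ((0:ℝ) * (1 - 2 * (-1))) = 0 by norm_num] at h
    exact h
  · -- v₃ atBot
    have harc : Tendsto (fun t => Real.arctan (Real.tanh (t / 2))) atBot
        (nhds (Real.arctan (-1))) :=
      (Real.continuous_arctan.tendsto (-1)).comp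
        (sep_tanh_atBot.comp (tendsto_id.atBot_div_const (by norm_num : (0:ℝ) < 2)))
    have hfrac : Tendsto (fun t => 2 / Real.cosh t) atBot (nhds 0) := by
      have h := sep_inv_cosh_atBot.const_mul 2
      rw [show ((2:ℝ) * 0) = 0 by norm_num] at h
      exact h.congr fun t => mul_one_div 2 (Real.cosh t)
    have hrest : Tendsto (fun t => 2 - Real.tanh t) atBot (nhds (2 - (-1))) :=
      tendsto_const_nhds.sub sep_tanh_atBot
    have h := (((tendsto_const_nhds : Tendsto (fun _ : ℝ => Real.pi) atBot (nhds Real.pi)).add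
      (harc.const_mul 4)).add (hfrac.mul hrest)).const_mul (1 / (4 * Real.sqrt 2))
    have hval : (1 / (4 * Real.sqrt 2)) *
        (Real.pi + 4 * Real.arctan (-1) + 0 * (2 - (-1))) = 0 := by
      rw [show Real.arctan (-1) = -(Real.pi/4) by
        rw [← Real.arctan_one, ← Real.arctan_neg]]
      ring
    rw [hval] at h
    exact h
  · -- v₃ atTop
    have harc : Tendsto (fun t => Real.arctan (Real.tanh (t / 2))) atTop
        (nhds (Real.arctan 1)) :=
      (Real.continuous_arctan.tendsto 1).comp
        (sep_tanh_atTop.comp (tendsto_id.atTop_div_const (by norm_num : (0:ℝ) < 2)))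
    have hfrac : Tendsto (fun t => 2 / Real.cosh t) atTop (nhds 0) := by
      have h := sep_inv_cosh_atTop.const_mul 2
      rw [show ((2:ℝ) * 0) = 0 by norm_num] at h
      exact h.congr fun t => mul_one_div 2 (Real.cosh t)
    have hrest : Tendsto (fun t => 2 - Real.tanh t) atTop (nhds (2 - 1)) :=
      tendsto_const_nhds.sub sep_tanh_atTop
    have h := (((tendsto_const_nhds : Tendsto (fun _ : ℝ => Real.pi) atTop (nhds Real.pi)).add
      (harc.const_mul 4)).add (hfrac.mul hrest)).const_mul (1 / (4 * Real.sqrt 2))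
    have hval : (1 / (4 * Real.sqrt 2)) *
        (Real.pi + 4 * Real.arctan 1 + 0 * (2 - 1)) = Real.pi / (2 * Real.sqrt 2) := by
      have hs2ne : Real.sqrt 2 ≠ 0 := by positivity
      rw [Real.arctan_one]
      field_simp
      ring
    rw [hval] at h
    exact h
end

section
/- Let x₀(t) = √2/cosh(t), y₁(t) = -(sinh(t)/cosh²(t))e^{-t}, and v₃⁰(t) = (1/(4√2))(π + 4·arctan(tanh(t/2)) + (2/cosh(t))(2 - tanh(t))). Then ∫_{-∞}^{+∞} y₁(t)·x₀(t)·v₃⁰(t)·e^{2t} dt = -(32 + 3π²)/24. -/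
open MeasureTheory

open Real Filter Topology in
/-- The explicit antiderivative, as a function of `u = exp t`. -/
noncomputable def phiF : ℝ → ℝ := fun u =>
  Real.arctan u * (2 * u / (u ^ 2 + 1)) +
    Real.arctan u * (2 * u / (u ^ 2 + 1)) * ((u ^ 2 - 1) / (u ^ 2 + 1)) / 2 -
    Real.arctan u ^ 2 / 2 - (u ^ 2 - 1) / (u ^ 2 + 1) / 2 -
    ((u ^ 2 - 1) / (u ^ 2 + 1)) ^ 2 / 8 + (2 * u / (u ^ 2 + 1)) ^ 2 / 4 -
    ((u ^ 2 - 1) / (u ^ 2 + 1)) ^ 3 / 6 + (2 * u / (u ^ 2 + 1)) ^ 4 / 8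

/-- Its derivative. -/
noncomputable def DphiF : ℝ → ℝ := fun u =>
  -(u ^ 2 * (u ^ 2 - 1) / (u ^ 2 + 1) ^ 3) *
    (4 * Real.arctan u + 8 * u / (u ^ 2 + 1) - 4 * u * (u ^ 2 - 1) / (u ^ 2 + 1) ^ 2)

open Real Filter Topology

lemma hasDerivAt_phiF (u : ℝ) : HasDerivAt phiF (DphiF u) u := by
  have hden : (u ^ 2 + 1 : ℝ) ≠ 0 := by positivity
  have h1 : HasDerivAt (fun u : ℝ => 2 * u) 2 u := by
    simpa using (hasDerivAt_id u).const_mul (2 : ℝ)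
  have h2 : HasDerivAt (fun u : ℝ => u ^ 2 + 1) (2 * u) u := by
    simpa using (hasDerivAt_pow 2 u).add_const (1 : ℝ)
  have h3 : HasDerivAt (fun u : ℝ => u ^ 2 - 1) (2 * u) u := by
    simpa using (hasDerivAt_pow 2 u).sub_const (1 : ℝ)
  have hsh := h1.div h2 hden
  have hth := h3.div h2 hden
  have hA := hasDerivAt_arctan u
  have H1 := (hA.mul hsh).add (((hA.mul hsh).mul hth).div_const 2)
  have H2 := H1.sub ((hA.pow 2).div_const 2)
  have H3 := H2.sub (hth.div_const 2)
  have H4 := H3.sub ((hth.pow 2).div_const 8)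
  have H5 := H4.add ((hsh.pow 2).div_const 4)
  have H6 := H5.sub ((hth.pow 3).div_const 6)
  have H := H6.add ((hsh.pow 4).div_const 8)
  refine H.congr_deriv ?_; symm
  simp only [DphiF]
  simp only [Pi.div_apply, Pi.mul_apply, Pi.pow_apply]
  push_cast
  field_simp
  ring

lemma tanh_half_eq (t : ℝ) : tanh (t / 2) = (exp t - 1) / (exp t + 1) := by
  have h2 : exp (t / 2) * exp (t / 2) = exp t := by
    rw [← Real.exp_add]; ring_nf
  have ha : (0:ℝ) < exp (t / 2) := exp_pos _
  rw [Real.tanh_eq_sinh_div_cosh, Real.sinh_eq, Real.cosh_eq, ← h2, Real.exp_neg]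
  have h3 : exp (t / 2) + (exp (t / 2))⁻¹ ≠ 0 := by positivity
  have h4 : exp (t / 2) * exp (t / 2) + 1 ≠ 0 := by positivity
  field_simp

lemma pi_add_arctan (t : ℝ) :
    π + 4 * arctan (tanh (t / 2)) = 4 * arctan (exp t) := by
  have hE : (0:ℝ) < exp t := exp_pos t
  have h1 : tanh (t / 2) * 1 < 1 := by
    rw [mul_one, tanh_half_eq, div_lt_one (by positivity)]
    linarith
  have h := Real.arctan_add h1
  rw [Real.arctan_one] at h
  have h2 : (tanh (t / 2) + 1) / (1 - tanh (t / 2) * 1) = exp t := by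
    rw [tanh_half_eq]
    have : exp t + 1 ≠ 0 := by positivity
    field_simp
    ring
  rw [h2] at h
  linarith

lemma integrable_exp_neg_abs' : Integrable (fun t : ℝ => exp (-|t|)) := by
  have h1 : IntegrableOn (fun t : ℝ => exp (-|t|)) (Set.Iic 0) := by
    apply (integrableOn_exp_Iic 0).congr_fun _ measurableSet_Iic
    intro x hx
    simp only [Set.mem_Iic] at hx
    simp [abs_of_nonpos hx]
  have h2 : IntegrableOn (fun t : ℝ => exp (-|t|)) (Set.Ioi 0) := by
    apply (exp_neg_integrableOn_Ioi 0 one_pos).congr_fun _ measurableSet_Ioi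
    intro x hx
    simp only [Set.mem_Ioi] at hx
    simp [abs_of_pos hx]
  have := h1.union h2
  rwa [Set.Iic_union_Ioi, integrableOn_univ] at this

lemma exp_div_cosh_sq_le (t : ℝ) : exp t / cosh t ^ 2 ≤ 4 * exp (-|t|) := by
  have hc := Real.cosh_pos t
  have h2c : exp |t| ≤ 2 * cosh t := by
    rw [← Real.cosh_abs]
    rw [Real.cosh_eq]
    have := (exp_pos (-|t|)).le
    linarith
  have he1 : exp (-|t|) * exp |t| = 1 := by rw [← Real.exp_add]; simp
  have he2 : exp t ≤ exp |t| := exp_le_exp.2 (le_abs_self t)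
  rw [div_le_iff₀ (by positivity)]
  have h3 : exp |t| ^ 2 ≤ (2 * cosh t) ^ 2 := by
    have := (exp_pos |t|).le
    nlinarith
  have h4 : exp (-|t|) * exp |t| ^ 2 ≤ exp (-|t|) * (2 * cosh t) ^ 2 :=
    mul_le_mul_of_nonneg_left h3 (exp_pos _).le
  have h5 : exp (-|t|) * exp |t| ^ 2 = exp |t| := by
    rw [pow_two, ← mul_assoc, he1, one_mul]
  nlinarith

lemma g_abs_bound (t : ℝ) :
    |(-(sinh t / cosh t ^ 2) * exp (-t)) * (Real.sqrt 2 / cosh t) *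
      ((1 / (4 * Real.sqrt 2)) * (π + 4 * arctan (tanh (t / 2)) +
        (2 / cosh t) * (2 - tanh t))) * exp (2 * t)| ≤ 18 * exp (-|t|) := by
  have hc := Real.cosh_pos t
  have hc1 := Real.one_le_cosh t
  have hsqrt : (0:ℝ) < Real.sqrt 2 := Real.sqrt_pos.2 (by norm_num)
  have hpi := Real.pi_pos
  have hs : |sinh t| ≤ cosh t := by
    rw [Real.abs_sinh, ← Real.cosh_abs t]
    have := Real.cosh_sub_sinh (|t|)
    have := (exp_pos (-|t|)).le
    linarith
  have hth : |tanh t| ≤ 1 := by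
    rw [Real.tanh_eq_sinh_div_cosh, abs_div, abs_of_pos hc]
    exact (div_le_one hc).2 hs
  -- bound on the v₃ factor
  have hZ : |π + 4 * arctan (tanh (t / 2)) + (2 / cosh t) * (2 - tanh t)| ≤ 3 * π + 6 := by
    have hat : |arctan (tanh (t / 2))| ≤ π / 2 :=
      abs_le.2 ⟨le_of_lt (Real.neg_pi_div_two_lt_arctan _),
        le_of_lt (Real.arctan_lt_pi_div_two _)⟩
    have h1 : |(2 / cosh t) * (2 - tanh t)| ≤ 6 := by
      rw [abs_mul]
      have a1 : |2 / cosh t| ≤ 2 := by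
        rw [abs_of_pos (by positivity), div_le_iff₀ hc]; linarith
      have a2 : |2 - tanh t| ≤ 3 := by
        obtain ⟨l, r⟩ := abs_le.1 hth
        rw [abs_le]; constructor <;> linarith
      calc |2 / cosh t| * |2 - tanh t| ≤ 2 * 3 :=
            mul_le_mul a1 a2 (abs_nonneg _) (by norm_num)
        _ = 6 := by norm_num
    have h2 : |π + 4 * arctan (tanh (t / 2))| ≤ π + 2 * π := by
      have := abs_add_le π (4 * arctan (tanh (t / 2)))
      rw [abs_mul] at this
      rw [abs_of_pos hpi] at this
      obtain ⟨l, r⟩ := abs_le.1 hat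
      rw [abs_le]
      have h4 : |(4:ℝ)| = 4 := by norm_num
      rw [h4] at this
      constructor <;> [skip; skip] <;>
        (obtain ⟨l2, r2⟩ := abs_le.1 hat; nlinarith [abs_nonneg (arctan (tanh (t/2)))])
    calc |π + 4 * arctan (tanh (t / 2)) + (2 / cosh t) * (2 - tanh t)|
        ≤ |π + 4 * arctan (tanh (t / 2))| + |(2 / cosh t) * (2 - tanh t)| := abs_add_le _ _
      _ ≤ (π + 2 * π) + 6 := add_le_add h2 h1
      _ = 3 * π + 6 := by ring
  have hv : |(1 / (4 * Real.sqrt 2)) * (π + 4 * arctan (tanh (t / 2)) +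
      (2 / cosh t) * (2 - tanh t))| ≤ (3 * π + 6) / (4 * Real.sqrt 2) := by
    rw [abs_mul, abs_of_pos (show (0:ℝ) < 1 / (4 * Real.sqrt 2) by positivity)]
    calc 1 / (4 * Real.sqrt 2) * |π + 4 * arctan (tanh (t / 2)) +
          (2 / cosh t) * (2 - tanh t)|
        ≤ 1 / (4 * Real.sqrt 2) * (3 * π + 6) :=
          mul_le_mul_of_nonneg_left hZ (by positivity)
      _ = (3 * π + 6) / (4 * Real.sqrt 2) := by ring
  have hyb : |(-(sinh t / cosh t ^ 2) * exp (-t))| ≤ exp (-t) / cosh t := by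
    rw [abs_mul, abs_neg, abs_div, abs_of_pos (show (0:ℝ) < cosh t ^ 2 by positivity),
      abs_of_pos (exp_pos _)]
    have h6 : |sinh t| / cosh t ^ 2 ≤ 1 / cosh t := by
      rw [div_le_div_iff₀ (by positivity) hc]
      nlinarith
    calc |sinh t| / cosh t ^ 2 * exp (-t) ≤ 1 / cosh t * exp (-t) :=
          mul_le_mul_of_nonneg_right h6 (exp_pos _).le
      _ = exp (-t) / cosh t := by ring
  have hee : exp (-t) * exp (2 * t) = exp t := by
    rw [← Real.exp_add]; ring_nf
  calc |(-(sinh t / cosh t ^ 2) * exp (-t)) * (Real.sqrt 2 / cosh t) *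
        ((1 / (4 * Real.sqrt 2)) * (π + 4 * arctan (tanh (t / 2)) +
          (2 / cosh t) * (2 - tanh t))) * exp (2 * t)|
      = |(-(sinh t / cosh t ^ 2) * exp (-t))| * (Real.sqrt 2 / cosh t) *
        |(1 / (4 * Real.sqrt 2)) * (π + 4 * arctan (tanh (t / 2)) +
          (2 / cosh t) * (2 - tanh t))| * exp (2 * t) := by
        rw [abs_mul, abs_mul, abs_mul, abs_of_pos (exp_pos (2 * t)),
          abs_of_pos (div_pos hsqrt hc)]
    _ ≤ (exp (-t) / cosh t) * (Real.sqrt 2 / cosh t) *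
        ((3 * π + 6) / (4 * Real.sqrt 2)) * exp (2 * t) := by
        apply mul_le_mul_of_nonneg_right _ (exp_pos _).le
        apply mul_le_mul _ hv (abs_nonneg _) (by positivity)
        exact mul_le_mul_of_nonneg_right hyb (by positivity)
    _ = (3 * π + 6) / 4 * (exp (-t) * exp (2 * t) / cosh t ^ 2) := by
        field_simp
    _ = (3 * π + 6) / 4 * (exp t / cosh t ^ 2) := by rw [hee]
    _ ≤ (3 * π + 6) / 4 * (4 * exp (-|t|)) :=
        mul_le_mul_of_nonneg_left (exp_div_cosh_sq_le t) (by positivity)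
    _ ≤ 18 * exp (-|t|) := by
        nlinarith [Real.pi_lt_four, (exp_pos (-|t|)).le]

lemma tendsto_phiF_atTop :
    Tendsto phiF atTop (𝓝 (-19 / 24 - π ^ 2 / 8)) := by
  have hshl : Tendsto (fun u : ℝ => 2 * u / (u ^ 2 + 1)) atTop (𝓝 0) := by
    have hc : ContinuousAt (fun r : ℝ => 2 * r / (1 + r ^ 2)) 0 :=
      ContinuousAt.div (by fun_prop) (by fun_prop) (by norm_num)
    have h := hc.tendsto.comp tendsto_inv_atTop_zero
    have he : (fun u : ℝ => 2 * u / (u ^ 2 + 1)) =ᶠ[atTop]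
        (fun r : ℝ => 2 * r / (1 + r ^ 2)) ∘ (fun u : ℝ => u⁻¹) := by
      filter_upwards [eventually_gt_atTop (0:ℝ)] with u hu
      have : u ≠ 0 := ne_of_gt hu
      simp only [Function.comp_apply]
      field_simp
    rw [tendsto_congr' he]
    simpa using h
  have hthl : Tendsto (fun u : ℝ => (u ^ 2 - 1) / (u ^ 2 + 1)) atTop (𝓝 1) := by
    have hc : ContinuousAt (fun r : ℝ => (1 - r ^ 2) / (1 + r ^ 2)) 0 :=
      ContinuousAt.div (by fun_prop) (by fun_prop) (by norm_num)
    have h := hc.tendsto.comp tendsto_inv_atTop_zero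
    have he : (fun u : ℝ => (u ^ 2 - 1) / (u ^ 2 + 1)) =ᶠ[atTop]
        (fun r : ℝ => (1 - r ^ 2) / (1 + r ^ 2)) ∘ (fun u : ℝ => u⁻¹) := by
      filter_upwards [eventually_gt_atTop (0:ℝ)] with u hu
      have : u ≠ 0 := ne_of_gt hu
      simp only [Function.comp_apply]
      field_simp
    rw [tendsto_congr' he]
    simpa using h
  have hA : Tendsto arctan atTop (𝓝 (π / 2)) :=
    tendsto_nhds_of_tendsto_nhdsWithin tendsto_arctan_atTop
  have H1 := (hA.mul hshl).add (((hA.mul hshl).mul hthl).div_const 2)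
  have H2 := H1.sub ((hA.pow 2).div_const 2)
  have H3 := H2.sub (hthl.div_const 2)
  have H4 := H3.sub ((hthl.pow 2).div_const 8)
  have H5 := H4.add ((hshl.pow 2).div_const 4)
  have H6 := H5.sub ((hthl.pow 3).div_const 6)
  have H := H6.add ((hshl.pow 4).div_const 8)
  have hval : (-19 / 24 - π ^ 2 / 8 : ℝ) =
      π / 2 * 0 + π / 2 * 0 * 1 / 2 - (π / 2) ^ 2 / 2 - 1 / 2 - 1 ^ 2 / 8 +
        0 ^ 2 / 4 - 1 ^ 3 / 6 + 0 ^ 4 / 8 := by ring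
  rw [hval]
  exact H

lemma continuousAt_phiF_zero : ContinuousAt phiF 0 := by
  unfold phiF
  have hden : ∀ u : ℝ, (u ^ 2 + 1 : ℝ) ≠ 0 := fun u => by positivity
  have hsh : Continuous (fun u : ℝ => 2 * u / (u ^ 2 + 1)) :=
    (continuous_const.mul continuous_id).div (by fun_prop) hden
  have hth : Continuous (fun u : ℝ => (u ^ 2 - 1) / (u ^ 2 + 1)) :=
    (by fun_prop : Continuous fun u : ℝ => u ^ 2 - 1).div (by fun_prop) hden
  exact (((((((( (Real.continuous_arctan.mul hsh).add
    (((Real.continuous_arctan.mul hsh).mul hth).div_const 2)).sub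
    ((Real.continuous_arctan.pow 2).div_const 2)).sub
    (hth.div_const 2)).sub
    ((hth.pow 2).div_const 8)).add
    ((hsh.pow 2).div_const 4)).sub
    ((hth.pow 3).div_const 6)).add
    ((hsh.pow 4).div_const 8))).continuousAt

lemma phiF_zero : phiF 0 = 13 / 24 := by
  simp [phiF]
  norm_num

/-- The integral `∫ y₁ x₀ v₃⁰ e^{2t} dt = -(32 + 3π²)/24` entering the
first-order coefficient of the separatrix value. -/
theorem integral_y1_x0_v30 :
    let x₀ : ℝ → ℝ := fun t => Real.sqrt 2 / Real.cosh t
    let y₁ : ℝ → ℝ := fun t => -(Real.sinh t / (Real.cosh t) ^ 2) * Real.exp (-t)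
    let v₃ : ℝ → ℝ := fun t => (1 / (4 * Real.sqrt 2)) *
      (Real.pi + 4 * Real.arctan (Real.tanh (t / 2)) +
        (2 / Real.cosh t) * (2 - Real.tanh t))
    (∫ t : ℝ, y₁ t * x₀ t * v₃ t * Real.exp (2 * t))
      = -(32 + 3 * Real.pi ^ 2) / 24 := by
  intro x₀ y₁ v₃
  have hcne : ∀ t : ℝ, Real.cosh t ≠ 0 := fun t => (Real.cosh_pos t).ne'
  have htanhc : Continuous Real.tanh := by
    have h : Real.tanh = fun x => Real.sinh x / Real.cosh x :=
      funext fun x => Real.tanh_eq_sinh_div_cosh x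
    rw [h]
    exact Real.continuous_sinh.div Real.continuous_cosh hcne
  -- continuity of the integrand
  have hgc : Continuous (fun t => y₁ t * x₀ t * v₃ t * Real.exp (2 * t)) := by
    have hy : Continuous y₁ :=
      ((Real.continuous_sinh.div (Real.continuous_cosh.pow 2)
        (fun t => pow_ne_zero 2 (hcne t))).neg).mul
        (Real.continuous_exp.comp continuous_neg)
    have hx : Continuous x₀ := continuous_const.div Real.continuous_cosh hcne
    have hv : Continuous v₃ := continuous_const.mul
      ((continuous_const.add (continuous_const.mul
        (Real.continuous_arctan.comp (htanhc.comp (continuous_id.div_const 2))))).add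
        ((continuous_const.div Real.continuous_cosh hcne).mul
          (continuous_const.sub htanhc)))
    exact ((hy.mul hx).mul hv).mul
      (Real.continuous_exp.comp (continuous_const.mul continuous_id))
  -- pointwise bound, hence integrability
  have hbound : ∀ t : ℝ, ‖y₁ t * x₀ t * v₃ t * Real.exp (2 * t)‖ ≤ 18 * exp (-|t|) :=
    fun t => g_abs_bound t
  have hint : Integrable (fun t => y₁ t * x₀ t * v₃ t * Real.exp (2 * t)) :=
    (integrable_exp_neg_abs'.const_mul 18).mono' hgc.aestronglyMeasurable
      (ae_of_all _ hbound)
  -- the antiderivative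
  have hderiv : ∀ t : ℝ, HasDerivAt (fun s => phiF (Real.exp s))
      (y₁ t * x₀ t * v₃ t * Real.exp (2 * t)) t := by
    intro t
    have h := (hasDerivAt_phiF (Real.exp t)).comp t (Real.hasDerivAt_exp t)
    refine h.congr_deriv ?_; symm
    show (-(Real.sinh t / (Real.cosh t) ^ 2) * Real.exp (-t)) *
        (Real.sqrt 2 / Real.cosh t) *
        ((1 / (4 * Real.sqrt 2)) * (π + 4 * arctan (tanh (t / 2)) +
          (2 / Real.cosh t) * (2 - Real.tanh t))) * Real.exp (2 * t)
        = DphiF (Real.exp t) * Real.exp t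
    rw [pi_add_arctan]
    have hE2 : Real.exp (2 * t) = Real.exp t * Real.exp t := by
      rw [← Real.exp_add]; ring_nf
    rw [Real.tanh_eq_sinh_div_cosh, Real.sinh_eq, Real.cosh_eq, Real.exp_neg, hE2]
    simp only [DphiF]
    have hE := Real.exp_pos t
    have h2 : Real.sqrt 2 ≠ 0 := by positivity
    have h3 : Real.exp t + (Real.exp t)⁻¹ ≠ 0 := by positivity
    have h4 : (Real.exp t) ^ 2 + 1 ≠ 0 := by positivity
    field_simp
    ring
  -- limits
  have htop : Tendsto (fun s => phiF (Real.exp s)) atTop (𝓝 (-19 / 24 - π ^ 2 / 8)) :=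
    tendsto_phiF_atTop.comp Real.tendsto_exp_atTop
  have hbot : Tendsto (fun s => phiF (Real.exp s)) atBot (𝓝 (13 / 24)) := by
    have := continuousAt_phiF_zero.tendsto.comp Real.tendsto_exp_atBot
    rwa [phiF_zero] at this
  have key := MeasureTheory.integral_of_hasDerivAt_of_tendsto hderiv hint hbot htop
  rw [key]
  ring
end

section
/- ∫_{-∞}^{+∞} (sinh²(t)/(2cosh⁴(t))) · e^{-t} · (2·arctan(e^{t}) - 1/cosh(t)) dt = π²/8 - 10/9. Equivalently, with y₁(t) = -(sinh(t)/cosh²(t))e^{-t} and v₄⁰(t) = -(sinh(t)/(2cosh²(t)))e^{-t}, one has ∫_{-∞}^{+∞} y₁(t)·v₄⁰(t)·e^{t}·(2·arctan(e^{t}) - 1/cosh(t)) dt = π²/8 - 10/9. -/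
open MeasureTheory
open Real Filter Topology

noncomputable def Fz (t : ℝ) : ℝ :=
  arctan (exp t) ^ 2 / 2
  + (-(sinh t * ((cosh t)⁻¹) ^ 2) / 2 + (cosh t)⁻¹ - ((cosh t)⁻¹) ^ 3 / 3) * arctan (exp t)
  + (-(sinh t * (cosh t)⁻¹) / 3 - 2 * ((sinh t) ^ 3 * ((cosh t)⁻¹) ^ 3) / 9
     - 3 * ((cosh t)⁻¹) ^ 2 / 8 + ((cosh t)⁻¹) ^ 4 / 8)

noncomputable def fz (t : ℝ) : ℝ :=
  (Real.sinh t) ^ 2 / (2 * (Real.cosh t) ^ 4) * Real.exp (-t) *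
    (2 * Real.arctan (Real.exp t) - 1 / Real.cosh t)

lemma hasDerivAt_Fz (t : ℝ) : HasDerivAt Fz (fz t) t := by
  have hc : Real.cosh t ≠ 0 := (Real.cosh_pos t).ne'
  have hA : HasDerivAt (fun t => arctan (exp t)) (1 / (1 + exp t ^ 2) * exp t) t :=
    (Real.hasDerivAt_arctan (exp t)).comp t (Real.hasDerivAt_exp t)
  have hq : HasDerivAt (fun t => (cosh t)⁻¹) (-(sinh t) / cosh t ^ 2) t :=
    (Real.hasDerivAt_cosh t).inv hc
  have hs := Real.hasDerivAt_sinh t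
  have H := ((hA.pow 2).div_const 2).add
    (((((hs.mul (hq.pow 2)).neg.div_const 2).add hq).sub ((hq.pow 3).div_const 3)).mul hA)
    |>.add ((((hs.mul hq).neg.div_const 3).sub
      ((((hs.pow 3).mul (hq.pow 3)).const_mul 2).div_const 9)).sub
      (((hq.pow 2).const_mul 3).div_const 8) |>.add ((hq.pow 4).div_const 8))
  unfold Fz fz
  refine H.congr_deriv ?_
  have he : Real.exp t ≠ 0 := Real.exp_ne_zero t
  have h1 : (1 : ℝ) + exp t ^ 2 ≠ 0 := by positivity
  simp only [Pi.add_apply, Pi.sub_apply, Pi.mul_apply, Pi.neg_apply, Pi.pow_apply,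
    Real.sinh_eq, Real.cosh_eq, Real.exp_neg]
  have h2 : Real.exp t + (Real.exp t)⁻¹ ≠ 0 := by positivity
  norm_num
  field_simp
  ring

lemma tendsto_cosh_inv_atTop : Tendsto (fun t => (Real.cosh t)⁻¹) atTop (𝓝 0) := by
  have h : Tendsto Real.cosh atTop atTop := by
    apply tendsto_atTop_mono (fun t => ?_) (Real.tendsto_exp_atTop.atTop_div_const two_pos)
    rw [Real.cosh_eq]
    have := Real.exp_pos (-t)
    linarith
  exact h.inv_tendsto_atTop

lemma tendsto_cosh_inv_atBot : Tendsto (fun t => (Real.cosh t)⁻¹) atBot (𝓝 0) := by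
  have h : Tendsto Real.cosh atBot atTop := by
    have h2 : Tendsto (fun t : ℝ => Real.exp (-t) / 2) atBot atTop :=
      (Real.tendsto_exp_atTop.comp tendsto_neg_atBot_atTop).atTop_div_const two_pos
    apply tendsto_atTop_mono (fun t => ?_) h2
    rw [Real.cosh_eq]
    have := Real.exp_pos t
    linarith
  exact h.inv_tendsto_atTop

lemma tendsto_tanh_atTop : Tendsto (fun t => Real.sinh t * (Real.cosh t)⁻¹) atTop (𝓝 1) := by
  have heq : (fun t => Real.sinh t * (Real.cosh t)⁻¹)
      = fun t => 1 - Real.exp (-t) * (Real.cosh t)⁻¹ := by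
    funext t
    have hc : Real.cosh t ≠ 0 := (Real.cosh_pos t).ne'
    have hs : Real.sinh t = Real.cosh t - Real.exp (-t) := by
      rw [Real.sinh_eq, Real.cosh_eq]; ring
    rw [hs]; field_simp
  rw [heq]
  have h0 : Tendsto (fun t => Real.exp (-t) * (Real.cosh t)⁻¹) atTop (𝓝 0) := by
    apply squeeze_zero (fun t => by positivity) (g := fun t => Real.exp (-t))
    · intro t
      have h1 : (Real.cosh t)⁻¹ ≤ 1 := by
        rw [inv_le_one_iff₀]; right; exact Real.one_le_cosh t
      nlinarith [Real.exp_pos (-t), Real.cosh_pos t, inv_pos.2 (Real.cosh_pos t)]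
    · exact Real.tendsto_exp_atBot.comp tendsto_neg_atTop_atBot
  simpa using tendsto_const_nhds.sub h0

lemma tendsto_tanh_atBot : Tendsto (fun t => Real.sinh t * (Real.cosh t)⁻¹) atBot (𝓝 (-1)) := by
  have heq : (fun t => Real.sinh t * (Real.cosh t)⁻¹)
      = fun t => Real.exp t * (Real.cosh t)⁻¹ - 1 := by
    funext t
    have hc : Real.cosh t ≠ 0 := (Real.cosh_pos t).ne'
    have hs : Real.sinh t = Real.exp t - Real.cosh t := by
      rw [Real.sinh_eq, Real.cosh_eq]; ring
    rw [hs]; field_simp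
  rw [heq]
  have h0 : Tendsto (fun t => Real.exp t * (Real.cosh t)⁻¹) atBot (𝓝 0) := by
    apply squeeze_zero (fun t => by positivity) (g := fun t => Real.exp t)
    · intro t
      have h1 : (Real.cosh t)⁻¹ ≤ 1 := by
        rw [inv_le_one_iff₀]; right; exact Real.one_le_cosh t
      nlinarith [Real.exp_pos t, inv_pos.2 (Real.cosh_pos t)]
    · exact Real.tendsto_exp_atBot
  simpa using h0.sub tendsto_const_nhds

lemma Fz_eq : Fz = fun t =>
    (arctan (exp t)) ^ 2 / 2
    + (-((Real.sinh t * (Real.cosh t)⁻¹) * (Real.cosh t)⁻¹) / 2 + (Real.cosh t)⁻¹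
        - ((Real.cosh t)⁻¹) ^ 3 / 3) * arctan (exp t)
    + (-(Real.sinh t * (Real.cosh t)⁻¹) / 3 - 2 * (Real.sinh t * (Real.cosh t)⁻¹) ^ 3 / 9
        - 3 * ((Real.cosh t)⁻¹) ^ 2 / 8 + ((Real.cosh t)⁻¹) ^ 4 / 8) := by
  funext t
  unfold Fz
  ring

lemma tendsto_Fz_atTop : Tendsto Fz atTop (𝓝 (π ^ 2 / 8 - 5 / 9)) := by
  rw [Fz_eq]
  have hA : Tendsto (fun t => arctan (exp t)) atTop (𝓝 (π / 2)) :=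
    (tendsto_nhds_of_tendsto_nhdsWithin Real.tendsto_arctan_atTop).comp Real.tendsto_exp_atTop
  have hP := tendsto_tanh_atTop
  have hQ := tendsto_cosh_inv_atTop
  have H := (((hA.pow 2).div_const 2).add
    (((((hP.mul hQ).neg.div_const 2).add hQ).sub ((hQ.pow 3).div_const 3)).mul hA)).add
    ((((hP.neg.div_const 3).sub (((hP.pow 3).const_mul 2).div_const 9)).sub
      (((hQ.pow 2).const_mul 3).div_const 8)).add ((hQ.pow 4).div_const 8))
  convert H using 2
  ring

lemma tendsto_Fz_atBot : Tendsto Fz atBot (𝓝 (5 / 9)) := by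
  rw [Fz_eq]
  have hA : Tendsto (fun t => arctan (exp t)) atBot (𝓝 0) := by
    have := (Real.continuous_arctan.tendsto 0).comp Real.tendsto_exp_atBot
    simpa [Real.arctan_zero, Function.comp_def] using this
  have hP := tendsto_tanh_atBot
  have hQ := tendsto_cosh_inv_atBot
  have H := (((hA.pow 2).div_const 2).add
    (((((hP.mul hQ).neg.div_const 2).add hQ).sub ((hQ.pow 3).div_const 3)).mul hA)).add
    ((((hP.neg.div_const 3).sub (((hP.pow 3).const_mul 2).div_const 9)).sub
      (((hQ.pow 2).const_mul 3).div_const 8)).add ((hQ.pow 4).div_const 8))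
  convert H using 2
  ring

lemma continuous_fz : Continuous fz := by
  unfold fz
  have h1 : Continuous fun t => (Real.sinh t) ^ 2 / (2 * (Real.cosh t) ^ 4) :=
    (Real.continuous_sinh.pow 2).div (by continuity) (fun t => by positivity)
  have h2 : Continuous fun t => 2 * Real.arctan (Real.exp t) - 1 / Real.cosh t :=
    ((continuous_const.mul (Real.continuous_arctan.comp Real.continuous_exp)).sub
      (continuous_const.div Real.continuous_cosh (fun t => (Real.cosh_pos t).ne')))
  exact (h1.mul (Real.continuous_exp.comp continuous_neg)).mul h2

lemma fz_abs_le (t : ℝ) :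
    |fz t| ≤ (π + 1) * (Real.exp (-t) * ((Real.cosh t)⁻¹) ^ 2 / 2) := by
  have hc := Real.cosh_pos t
  have h1 : |(Real.sinh t) ^ 2 / (2 * (Real.cosh t) ^ 4)| ≤ ((Real.cosh t)⁻¹) ^ 2 / 2 := by
    rw [abs_of_nonneg (by positivity)]
    rw [div_le_div_iff₀ (by positivity) (by positivity)]
    have hs2 : (Real.sinh t) ^ 2 ≤ (Real.cosh t) ^ 2 := by nlinarith [Real.cosh_sq t]
    calc (Real.sinh t) ^ 2 * 2 ≤ (Real.cosh t) ^ 2 * 2 := by nlinarith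
      _ = ((Real.cosh t)⁻¹) ^ 2 * (2 * Real.cosh t ^ 4) := by
          field_simp
  have h2 : |2 * Real.arctan (Real.exp t) - 1 / Real.cosh t| ≤ π + 1 := by
    have ha1 : -(π / 2) < Real.arctan (Real.exp t) := Real.neg_pi_div_two_lt_arctan _
    have ha2 : Real.arctan (Real.exp t) < π / 2 := Real.arctan_lt_pi_div_two _
    have hc1 : 1 / Real.cosh t ≤ 1 := by
      rw [div_le_one hc]; exact Real.one_le_cosh t
    have hc2 : 0 < 1 / Real.cosh t := by positivity
    rw [abs_le]
    constructor <;> nlinarith [Real.pi_pos]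
  have he := Real.exp_pos (-t)
  calc |fz t| = |(Real.sinh t) ^ 2 / (2 * (Real.cosh t) ^ 4)| * Real.exp (-t) *
        |2 * Real.arctan (Real.exp t) - 1 / Real.cosh t| := by
        unfold fz
        rw [abs_mul, abs_mul, abs_of_nonneg he.le]
    _ ≤ (((Real.cosh t)⁻¹) ^ 2 / 2) * Real.exp (-t) * (π + 1) := by
        apply mul_le_mul (mul_le_mul_of_nonneg_right h1 he.le) h2 (abs_nonneg _) (by positivity)
    _ = (π + 1) * (Real.exp (-t) * ((Real.cosh t)⁻¹) ^ 2 / 2) := by ring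

lemma integrable_fz : Integrable fz := by
  rw [← integrableOn_univ, ← Set.Iic_union_Ioi (a := (0 : ℝ)), integrableOn_union]
  constructor
  · apply Integrable.mono ((integrableOn_exp_Iic 0).const_mul (2 * (π + 1)))
      continuous_fz.aestronglyMeasurable.restrict
    filter_upwards [ae_restrict_mem measurableSet_Iic] with t ht
    have ht : t ≤ 0 := ht
    have hc := Real.cosh_pos t
    have hpi := Real.pi_pos
    have hb : (Real.cosh t)⁻¹ ≤ 2 * Real.exp t := by
      rw [inv_le_iff_one_le_mul₀ hc]
      have h1 : Real.exp (-t) / 2 ≤ Real.cosh t := by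
        rw [Real.cosh_eq]; have := Real.exp_pos t; linarith
      have h2 := Real.exp_pos (-t)
      have h3 : Real.exp t * Real.exp (-t) = 1 := by
        rw [← Real.exp_add]; simp
      nlinarith
    have key : Real.exp (-t) * ((Real.cosh t)⁻¹) ^ 2 / 2 ≤ 2 * Real.exp t := by
      have hq : (0:ℝ) ≤ (Real.cosh t)⁻¹ := by positivity
      have h3 : Real.exp (-t) * Real.exp t = 1 := by
        rw [← Real.exp_add]; simp
      have h4 : ((Real.cosh t)⁻¹) ^ 2 ≤ (2 * Real.exp t) ^ 2 := by
        apply pow_le_pow_left₀ hq hb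
      calc Real.exp (-t) * ((Real.cosh t)⁻¹) ^ 2 / 2
          ≤ Real.exp (-t) * (2 * Real.exp t) ^ 2 / 2 := by
            have := Real.exp_pos (-t); nlinarith
        _ = 2 * Real.exp t := by
            have : Real.exp (-t) * (Real.exp t * Real.exp t) = Real.exp t := by
              rw [← Real.exp_add, ← Real.exp_add]; ring_nf
            nlinarith [this]
    rw [Real.norm_eq_abs, Real.norm_eq_abs]
    calc |fz t| ≤ (π + 1) * (Real.exp (-t) * ((Real.cosh t)⁻¹) ^ 2 / 2) := fz_abs_le t
      _ ≤ (π + 1) * (2 * Real.exp t) := by nlinarith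
      _ ≤ |2 * (π + 1) * Real.exp t| := by
          rw [abs_of_nonneg (by positivity)]; exact le_of_eq (by ring)
  · apply Integrable.mono (((exp_neg_integrableOn_Ioi 0 one_pos)).const_mul (π + 1))
      continuous_fz.aestronglyMeasurable.restrict
    filter_upwards [ae_restrict_mem measurableSet_Ioi] with t ht
    have ht : (0:ℝ) < t := ht
    have hc := Real.cosh_pos t
    have hpi := Real.pi_pos
    have hq : (Real.cosh t)⁻¹ ≤ 1 := by
      rw [inv_le_one_iff₀]; right; exact Real.one_le_cosh t
    have hq0 : (0:ℝ) ≤ (Real.cosh t)⁻¹ := by positivity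
    have key : Real.exp (-t) * ((Real.cosh t)⁻¹) ^ 2 / 2 ≤ Real.exp (-t) := by
      have h5 := Real.exp_pos (-t)
      have hq2 : ((Real.cosh t)⁻¹) ^ 2 ≤ 1 := by nlinarith
      nlinarith [mul_nonneg (sub_nonneg.2 hq2) h5.le]
    rw [Real.norm_eq_abs, Real.norm_eq_abs]
    calc |fz t| ≤ (π + 1) * (Real.exp (-t) * ((Real.cosh t)⁻¹) ^ 2 / 2) := fz_abs_le t
      _ ≤ (π + 1) * Real.exp (-t) := by nlinarith [Real.exp_pos (-t)]
      _ ≤ |(π + 1) * Real.exp (-1 * t)| := by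
          rw [abs_of_nonneg (by positivity), neg_one_mul]

lemma integral_fz : ∫ t : ℝ, fz t = π ^ 2 / 8 - 10 / 9 := by
  have h := integral_of_hasDerivAt_of_tendsto hasDerivAt_Fz integrable_fz
    tendsto_Fz_atBot tendsto_Fz_atTop
  rw [h]; ring

/-- The integral `∫ (sinh² t/(2cosh⁴ t)) e^{-t} (2 arctan eᵗ - 1/cosh t) dt
= π²/8 - 10/9`, equivalently `∫ y₁ v₄⁰ eᵗ (2 arctan eᵗ - 1/cosh t) dt
= π²/8 - 10/9`. -/
theorem integral_y1_v40_z1 :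
    let y₁ : ℝ → ℝ := fun t => -(Real.sinh t / (Real.cosh t) ^ 2) * Real.exp (-t)
    let v₄ : ℝ → ℝ := fun t => -(Real.sinh t / (2 * (Real.cosh t) ^ 2)) * Real.exp (-t)
    (∫ t : ℝ, ((Real.sinh t) ^ 2 / (2 * (Real.cosh t) ^ 4)) * Real.exp (-t) *
        (2 * Real.arctan (Real.exp t) - 1 / Real.cosh t))
      = Real.pi ^ 2 / 8 - 10 / 9 ∧
    (∫ t : ℝ, y₁ t * v₄ t * Real.exp t *
        (2 * Real.arctan (Real.exp t) - 1 / Real.cosh t))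
      = Real.pi ^ 2 / 8 - 10 / 9 := by
  intro y₁ v₄
  refine ⟨integral_fz, ?_⟩
  have heq : (fun t : ℝ => y₁ t * v₄ t * Real.exp t *
      (2 * Real.arctan (Real.exp t) - 1 / Real.cosh t)) = fz := by
    funext t
    show -(Real.sinh t / (Real.cosh t) ^ 2) * Real.exp (-t) *
        (-(Real.sinh t / (2 * (Real.cosh t) ^ 2)) * Real.exp (-t)) * Real.exp t *
        (2 * Real.arctan (Real.exp t) - 1 / Real.cosh t) = fz t
    unfold fz
    have hc : Real.cosh t ≠ 0 := (Real.cosh_pos t).ne'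
    rw [Real.exp_neg]
    field_simp
  rw [heq]
  exact integral_fz
end
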